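/- Let uₙ(x,y,t) = e^{iηₙ y + √λₙ t} vₙ(x) with ηₙ ≥ 1, λₙ ≤ C₁ (ln ηₙ)², vₙ ∈ L²(B), ‖vₙ‖_{L²(B(0,1/2))} ≥ c > 0, and ‖vₙ‖_{L²(B)} = 1. Let V = B × [−π,π] × [−δ,δ] and V' = B(0,1/2) × [−π/2,π/2] × [−δ/2,δ/2]. Then: (i) ‖∂_y^k uₙ‖²_{L²(V')} ≥ C ηₙ^{2k} for a constant C > 0 independent of k and n; (ii) ‖uₙ‖²_{L²(V)} ≤ C' ηₙ^{2√C₁ δ}. Consequently, for k > √C₁ δ, the ratio ‖∂_y^k uₙ‖²_{L²(V')} / ( ‖uₙ‖²_{L²(V)} ) tends to infinity as ηₙ → ∞. -/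

import Mathlib

open MeasureTheory Filter Real

lemma iter_exp (a : ℝ) (b z : ℂ) (k : ℕ) :
    iteratedDeriv k (fun y : ℝ => Complex.exp (Complex.I * a * y + b) * z)
      = fun y : ℝ => (Complex.I * a) ^ k * (Complex.exp (Complex.I * a * y + b) * z) := by
  induction k with
  | zero => simp
  | succ k ih =>
    rw [iteratedDeriv_succ, ih]
    funext y
    have h1 : HasDerivAt (fun y : ℝ => Complex.I * a * y + b) (Complex.I * a) y := by
      simpa using ((Complex.ofRealCLM.hasDerivAt (x := y)).const_mul (Complex.I * a)).add_const b
    have h2 : HasDerivAt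
        (fun y : ℝ => (Complex.I * a) ^ k * (Complex.exp (Complex.I * a * y + b) * z))
        ((Complex.I * a) ^ k * ((Complex.exp (Complex.I * a * y + b) * (Complex.I * a)) * z)) y :=
      ((h1.cexp).mul_const z).const_mul _
    rw [h2.deriv]; ring

lemma factor {E : Type*} [MeasureSpace E] [SigmaFinite (volume : Measure E)]
    (S : Set E) (A B : Set ℝ) (f : E → ℝ) (g : ℝ → ℝ) :
    ∫ p in S ×ˢ (A ×ˢ B), f p.1 * g p.2.2 =
      (∫ x in S, f x) * ((volume A).toReal * ∫ t in B, g t) := by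
  rw [Measure.volume_eq_prod]
  rw [setIntegral_prod_mul f (fun q : ℝ × ℝ => g q.2) S (A ×ˢ B)]
  congr 1
  rw [Measure.volume_eq_prod]
  have h : ∫ (y : ℝ × ℝ) in A ×ˢ B, g y.2 ∂(volume : Measure ℝ).prod volume
      = ∫ y in A ×ˢ B, (fun _ : ℝ => (1 : ℝ)) y.1 * g y.2 ∂(volume : Measure ℝ).prod volume := by
    simp
  rw [h, setIntegral_prod_mul (fun _ : ℝ => (1 : ℝ)) g A B]
  simp [mul_comm]
  exact mul_comm _ _

lemma expint_lower (s d : ℝ) (hs : 0 ≤ s) (hd : 0 < d) :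
    d ≤ ∫ t in Set.Icc (-d) d, Real.exp (s * t) ^ 2 := by
  have hcont : Continuous fun t : ℝ => Real.exp (s * t) ^ 2 := by continuity
  have h2 : ∫ t in Set.Icc 0 d, Real.exp (s * t) ^ 2
      ≤ ∫ t in Set.Icc (-d) d, Real.exp (s * t) ^ 2 := by
    refine setIntegral_mono_set (hcont.integrableOn_Icc) ?_ ?_
    · exact Eventually.of_forall fun t => by positivity
    · exact HasSubset.Subset.eventuallyLE (Set.Icc_subset_Icc (by linarith) le_rfl)
  have h1 : ∫ t in Set.Icc 0 d, (1 : ℝ) ≤ ∫ t in Set.Icc 0 d, Real.exp (s * t) ^ 2 := by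
    refine setIntegral_mono_on (integrableOn_const ?_) hcont.integrableOn_Icc
      measurableSet_Icc fun t ht => ?_
    · simp [Real.volume_Icc]
    · have h1 : 1 ≤ Real.exp (s * t) := Real.one_le_exp (mul_nonneg hs ht.1)
      nlinarith
  have h0 : ∫ t in Set.Icc 0 d, (1 : ℝ) = d := by
    simp [Real.volume_Icc, ENNReal.toReal_ofReal hd.le, hd.le]
  linarith

lemma expint_upper (s d : ℝ) (hs : 0 ≤ s) (hd : 0 ≤ d) :
    ∫ t in Set.Icc (-d) d, Real.exp (s * t) ^ 2 ≤ 2 * d * Real.exp (s * d) ^ 2 := by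
  have hcont : Continuous fun t : ℝ => Real.exp (s * t) ^ 2 := by continuity
  have h1 : ∫ t in Set.Icc (-d) d, Real.exp (s * t) ^ 2
      ≤ ∫ _t in Set.Icc (-d) d, Real.exp (s * d) ^ 2 := by
    refine setIntegral_mono_on hcont.integrableOn_Icc (integrableOn_const ?_)
      measurableSet_Icc fun t ht => ?_
    · simp [Real.volume_Icc]
    · have := Real.exp_le_exp.2 (mul_le_mul_of_nonneg_left ht.2 hs)
      have h0 := Real.exp_pos (s * t)
      nlinarith
  have h0 : ∫ _t in Set.Icc (-d) d, Real.exp (s * d) ^ 2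
      = 2 * d * Real.exp (s * d) ^ 2 := by
    rw [setIntegral_const]
    rw [measureReal_def, Real.volume_Icc, ENNReal.toReal_ofReal (by linarith : (0:ℝ) ≤ d - -d)]
    rw [smul_eq_mul]; ring
  linarith

lemma norm_term (a s t y w : ℝ) (k : ℕ) (ha : 0 ≤ a) :
    ‖(Complex.I * a) ^ k * (Complex.exp (Complex.I * a * (y : ℂ) + (s : ℂ) * (t : ℂ)) * (w : ℂ))‖ ^ 2
      = a ^ (2 * k) * (w ^ 2 * Real.exp (s * t) ^ 2) := by
  have hre : (Complex.I * a * (y : ℂ) + (s : ℂ) * (t : ℂ)).re = s * t := by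
    simp [Complex.add_re, Complex.mul_re]
  simp only [norm_mul, norm_pow, Complex.norm_exp, hre,
    Complex.norm_real, Real.norm_eq_abs, Complex.norm_I, abs_of_nonneg ha, one_mul]
  rw [pow_mul, mul_pow, mul_pow, sq_abs]
  ring


/-- for `uₙ(x,y,t) = e^{iηₙ y + √λₙ t} vₙ(x)` with `ηₙ ≥ 1`,
`λₙ ≤ C₁ (ln ηₙ)²`, `‖vₙ‖_{L²(B(0,1/2))} ≥ c > 0` and `‖vₙ‖_{L²(B)} = 1`, one has
(i) `‖∂_y^k uₙ‖²_{L²(V')} ≥ C ηₙ^{2k}` with `C` independent of `k, n`;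
(ii) `‖uₙ‖²_{L²(V)} ≤ C' ηₙ^{2√C₁ δ}`;
and consequently for `k > √C₁ δ` the ratio tends to infinity as `ηₙ → ∞`. -/
theorem growth_contradiction {m : ℕ} (δ c C₁ : ℝ)
    (hδ : 0 < δ) (hc : 0 < c) (hC₁ : 0 ≤ C₁)
    (v : ℕ → EuclideanSpace ℝ (Fin m) → ℝ) (lam η : ℕ → ℝ)
    (hvc : ∀ n, Continuous (v n))
    (hη1 : ∀ n, 1 ≤ η n) (hηtop : Tendsto η atTop atTop)
    (hlamnn : ∀ n, 0 ≤ lam n)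
    (hlam : ∀ n, lam n ≤ C₁ * (Real.log (η n)) ^ 2)
    (hnorm : ∀ n, (∫ x in Metric.ball (0 : EuclideanSpace ℝ (Fin m)) 1, (v n x) ^ 2) = 1)
    (hlow : ∀ n, c ^ 2 ≤
      ∫ x in Metric.ball (0 : EuclideanSpace ℝ (Fin m)) (1 / 2), (v n x) ^ 2)
    (U : ℕ → EuclideanSpace ℝ (Fin m) × ℝ × ℝ → ℂ)
    (hU : ∀ n (x : EuclideanSpace ℝ (Fin m)) (y t : ℝ),
      U n (x, y, t) = Complex.exp (Complex.I * (η n) * y + Real.sqrt (lam n) * t) * (v n x : ℂ))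
    (V V' : Set (EuclideanSpace ℝ (Fin m) × ℝ × ℝ))
    (hV : V = (Metric.ball 0 1) ×ˢ (Set.Icc (-π) π ×ˢ Set.Icc (-δ) δ))
    (hV' : V' = (Metric.ball 0 (1 / 2)) ×ˢ
      (Set.Icc (-(π / 2)) (π / 2) ×ˢ Set.Icc (-(δ / 2)) (δ / 2))) :
    (∃ C > (0 : ℝ), ∀ k n : ℕ,
      C * (η n) ^ (2 * k) ≤
        ∫ p in V', ‖iteratedDeriv k (fun y => U n (p.1, y, p.2.2)) p.2.1‖ ^ 2) ∧
    (∃ C' > (0 : ℝ), ∀ n : ℕ,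
      (∫ p in V, ‖U n p‖ ^ 2) ≤ C' * (η n) ^ (2 * Real.sqrt C₁ * δ)) ∧
    (∀ k : ℕ, Real.sqrt C₁ * δ < (k : ℝ) →
      Tendsto (fun n =>
        (∫ p in V', ‖iteratedDeriv k (fun y => U n (p.1, y, p.2.2)) p.2.1‖ ^ 2) /
          ∫ p in V, ‖U n p‖ ^ 2) atTop atTop) := by
  have hηpos : ∀ n, (0:ℝ) < η n := fun n => lt_of_lt_of_le one_pos (hη1 n)
  have hsq : ∀ n, (0:ℝ) ≤ Real.sqrt (lam n) := fun n => Real.sqrt_nonneg _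
  -- pointwise description of u and its derivatives
  have hfun : ∀ n (p : EuclideanSpace ℝ (Fin m) × ℝ × ℝ),
      (fun y : ℝ => U n (p.1, y, p.2.2))
        = fun y : ℝ => Complex.exp (Complex.I * (η n) * y
            + (Real.sqrt (lam n) : ℂ) * (p.2.2 : ℂ)) * (v n p.1 : ℂ) := by
    intro n p; funext y; rw [hU]
  have hnum : ∀ n k (p : EuclideanSpace ℝ (Fin m) × ℝ × ℝ),
      ‖iteratedDeriv k (fun y => U n (p.1, y, p.2.2)) p.2.1‖ ^ 2
        = η n ^ (2 * k) * ((v n p.1) ^ 2 * Real.exp (Real.sqrt (lam n) * p.2.2) ^ 2) := by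
    intro n k p
    rw [hfun n p, iter_exp]
    exact norm_term (η n) (Real.sqrt (lam n)) p.2.2 p.2.1 (v n p.1) k (hηpos n).le
  have hden : ∀ n (p : EuclideanSpace ℝ (Fin m) × ℝ × ℝ),
      ‖U n p‖ ^ 2 = (v n p.1) ^ 2 * Real.exp (Real.sqrt (lam n) * p.2.2) ^ 2 := by
    intro n p
    have hp : U n p = Complex.exp (Complex.I * (η n) * p.2.1
        + (Real.sqrt (lam n) : ℂ) * (p.2.2 : ℂ)) * (v n p.1 : ℂ) := by
      conv_lhs => rw [← Prod.mk.eta (p := p), ← Prod.mk.eta (p := p.2)]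
      rw [hU]
    rw [hp]
    simpa using norm_term (η n) (Real.sqrt (lam n)) p.2.2 p.2.1 (v n p.1) 0 (hηpos n).le
  -- factored values of the two integrals
  have hπ2 : (volume (Set.Icc (-(π/2)) (π/2))).toReal = π := by
    rw [Real.volume_Icc, ENNReal.toReal_ofReal (by linarith [pi_pos] : (0:ℝ) ≤ π/2 - -(π/2))]
    ring
  have hπ : (volume (Set.Icc (-π) π)).toReal = 2 * π := by
    rw [Real.volume_Icc, ENNReal.toReal_ofReal (by linarith [pi_pos] : (0:ℝ) ≤ π - -π)]
    ring
  have hNum : ∀ n k, (∫ p in V', ‖iteratedDeriv k (fun y => U n (p.1, y, p.2.2)) p.2.1‖ ^ 2)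
      = η n ^ (2*k) * ((∫ x in Metric.ball (0 : EuclideanSpace ℝ (Fin m)) (1/2), (v n x) ^ 2)
          * (π * ∫ t in Set.Icc (-(δ/2)) (δ/2), Real.exp (Real.sqrt (lam n) * t) ^ 2)) := by
    intro n k
    rw [hV']
    simp_rw [hnum n k]
    rw [MeasureTheory.integral_const_mul]
    congr 1
    exact (factor _ _ _ (fun x => v n x ^ 2)
      (fun t => Real.exp (Real.sqrt (lam n) * t) ^ 2)).trans (by rw [hπ2])
  have hDen : ∀ n, (∫ p in V, ‖U n p‖ ^ 2)
      = (2 * π) * ∫ t in Set.Icc (-δ) δ, Real.exp (Real.sqrt (lam n) * t) ^ 2 := by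
    intro n
    rw [hV]
    simp_rw [hden n]
    exact (factor _ _ _ (fun x => v n x ^ 2)
      (fun t => Real.exp (Real.sqrt (lam n) * t) ^ 2)).trans (by rw [hπ, hnorm n]; ring)
  -- Part (i)
  have part1 : ∀ k n : ℕ, c ^ 2 * (π * (δ/2)) * (η n) ^ (2 * k) ≤
      ∫ p in V', ‖iteratedDeriv k (fun y => U n (p.1, y, p.2.2)) p.2.1‖ ^ 2 := by
    intro k n
    rw [hNum n k]
    have hI := expint_lower (Real.sqrt (lam n)) (δ/2) (hsq n) (by linarith)
    have hA := hlow n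
    have h1 : c ^ 2 * (π * (δ/2)) ≤
        (∫ x in Metric.ball (0 : EuclideanSpace ℝ (Fin m)) (1/2), (v n x) ^ 2)
          * (π * ∫ t in Set.Icc (-(δ/2)) (δ/2), Real.exp (Real.sqrt (lam n) * t) ^ 2) := by
      have h2 : π * (δ/2) ≤ π * ∫ t in Set.Icc (-(δ/2)) (δ/2),
          Real.exp (Real.sqrt (lam n) * t) ^ 2 :=
        mul_le_mul_of_nonneg_left hI pi_pos.le
      exact mul_le_mul hA h2 (by nlinarith [pi_pos]) (le_trans (by positivity) hA)
    rw [mul_comm]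
    exact mul_le_mul_of_nonneg_left h1 (pow_nonneg (hηpos n).le _)
  -- Part (ii)
  have part2 : ∀ n : ℕ, (∫ p in V, ‖U n p‖ ^ 2)
      ≤ (4 * π * δ) * (η n) ^ (2 * Real.sqrt C₁ * δ) := by
    intro n
    rw [hDen n]
    have hup := expint_upper (Real.sqrt (lam n)) δ (hsq n) hδ.le
    have hle : Real.sqrt (lam n) ≤ Real.sqrt C₁ * Real.log (η n) := by
      have h := Real.sqrt_le_sqrt (hlam n)
      rwa [Real.sqrt_mul hC₁, Real.sqrt_sq (Real.log_nonneg (hη1 n))] at h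
    have hexp : Real.exp (Real.sqrt (lam n) * δ) ^ 2 ≤ (η n) ^ (2 * Real.sqrt C₁ * δ) := by
      rw [Real.rpow_def_of_pos (hηpos n), sq, ← Real.exp_add]
      apply Real.exp_le_exp.2
      nlinarith [Real.log_nonneg (hη1 n)]
    calc (2 * π) * ∫ t in Set.Icc (-δ) δ, Real.exp (Real.sqrt (lam n) * t) ^ 2
        ≤ (2 * π) * (2 * δ * Real.exp (Real.sqrt (lam n) * δ) ^ 2) :=
          mul_le_mul_of_nonneg_left hup (by positivity)
      _ = (4 * π * δ) * Real.exp (Real.sqrt (lam n) * δ) ^ 2 := by ring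
      _ ≤ (4 * π * δ) * (η n) ^ (2 * Real.sqrt C₁ * δ) :=
          mul_le_mul_of_nonneg_left hexp (by positivity)
  -- denominator positivity
  have hDenPos : ∀ n, (0:ℝ) < ∫ p in V, ‖U n p‖ ^ 2 := by
    intro n
    rw [hDen n]
    have := expint_lower (Real.sqrt (lam n)) δ (hsq n) hδ
    nlinarith [pi_pos]
  have hCpos : (0:ℝ) < c ^ 2 * (π * (δ/2)) :=
    mul_pos (pow_pos hc 2) (mul_pos pi_pos (by linarith))
  have hC'pos : (0:ℝ) < 4 * π * δ := by nlinarith [pi_pos]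
  refine ⟨⟨c ^ 2 * (π * (δ/2)), hCpos, part1⟩,
    ⟨4 * π * δ, hC'pos, part2⟩, ?_⟩
  -- Part (iii)
  intro k hk
  set C : ℝ := c ^ 2 * (π * (δ/2)) with hC
  set C' : ℝ := 4 * π * δ with hC'
  set e : ℝ := 2 * (k:ℝ) - 2 * Real.sqrt C₁ * δ with he
  have hepos : 0 < e := by rw [he]; linarith
  have hmain : ∀ n, (C / C') * (η n) ^ e ≤
      (∫ p in V', ‖iteratedDeriv k (fun y => U n (p.1, y, p.2.2)) p.2.1‖ ^ 2) /
        ∫ p in V, ‖U n p‖ ^ 2 := by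
    intro n
    have h1 := part1 k n
    have h2 := part2 n
    have h3 := hDenPos n
    have h4 : (C * (η n) ^ (2 * k)) / (C' * (η n) ^ (2 * Real.sqrt C₁ * δ)) ≤
        (∫ p in V', ‖iteratedDeriv k (fun y => U n (p.1, y, p.2.2)) p.2.1‖ ^ 2) /
          ∫ p in V, ‖U n p‖ ^ 2 :=
      div_le_div₀ (le_trans (mul_nonneg hCpos.le (pow_nonneg (hηpos n).le _)) h1) h1 h3 h2
    refine le_trans (le_of_eq ?_) h4
    rw [he, Real.rpow_sub (hηpos n),
      show (2 * (k:ℝ)) = ((2 * k : ℕ) : ℝ) by push_cast; ring, Real.rpow_natCast]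
    have hr : (0:ℝ) < (η n) ^ (2 * Real.sqrt C₁ * δ) := Real.rpow_pos_of_pos (hηpos n) _
    field_simp
  have htend : Tendsto (fun n => (C / C') * (η n) ^ e) atTop atTop :=
    Tendsto.const_mul_atTop (div_pos hCpos hC'pos)
      ((tendsto_rpow_atTop hepos).comp hηtop)
  exact tendsto_atTop_mono hmain htend
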